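/- Let S have (p,δ)-structure with characteristics (κ₀, κ₁, p) for some p ∈ (1,∞) and δ ≥ 0. Then there exist constants c, C > 0 depending only on the characteristics (κ₀, κ₁, p) of S such that for all P, Q ∈ ℝ^{3×3}: c·φ'_{|P^sym|}(|P^sym − Q^sym|) ≤ |S(P) − S(Q)| ≤ C·φ'_{|P^sym|}(|P^sym − Q^sym|), where φ'_a denotes the derivative of the shifted N-function φ_a of φ = φ_{p,δ}. -/

import Mathlib

noncomputable section

open Matrix

attribute [local instance] Matrix.normedAddCommGroup Matrix.normedSpace

open MeasureTheory

/-- 3×3 real matrices. -/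
abbrev Mat3 := Matrix (Fin 3) (Fin 3) ℝ

/-- The symmetric part `P^sym = (P + Pᵀ)/2` of a matrix. -/
def msym (P : Mat3) : Mat3 := (1 / 2 : ℝ) • (P + Pᵀ)

/-- The scalar product of tensors `A·B = Σ_{i,j} A_{ij} B_{ij}`. -/
def mdot (A B : Mat3) : ℝ := ∑ i, ∑ j, A i j * B i j

/-- The Euclidean (Frobenius) norm `|A| = √(A·A)`. -/
def mnorm (A : Mat3) : ℝ := Real.sqrt (mdot A A)

/-- The N-function `φ_{p,δ}(t) = ∫₀ᵗ (δ+s)^{p-2} s ds`. -/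
def phi (p δ t : ℝ) : ℝ := ∫ s in (0:ℝ)..t, (δ + s) ^ (p - 2) * s

/-- Its first derivative `φ'(t) = (δ+t)^{p-2} t`. -/
def phi' (p δ t : ℝ) : ℝ := (δ + t) ^ (p - 2) * t

/-- Its second derivative `φ''(t) = (p-2)(δ+t)^{p-3} t + (δ+t)^{p-2}` (for `t > 0`). -/
def phi'' (p δ t : ℝ) : ℝ := (p - 2) * (δ + t) ^ (p - 3) * t + (δ + t) ^ (p - 2)

/-- The partial derivative `∂_{kl} S_{ij}(P)` of the `(i,j)` component of `S`
with respect to the `(k,l)` matrix entry. -/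
def DS (S : Mat3 → Mat3) (P : Mat3) (k l i j : Fin 3) : ℝ :=
  fderiv ℝ S P (Matrix.single k l 1) i j

/-- A tensor field `S` has `(p,δ)`-structure with characteristics `(κ₀, κ₁, p)`. -/
structure PDelta (p δ κ₀ κ₁ : ℝ) (S : Mat3 → Mat3) : Prop where
  cont : Continuous S
  smooth : ContDiffOn ℝ 1 S {(0 : Mat3)}ᶜ
  symval : ∀ P, (S P)ᵀ = S P
  symdep : ∀ P, S P = S (msym P)
  zero : S 0 = 0
  lower : ∀ P Q : Mat3, msym P ≠ 0 →
    κ₀ * phi'' p δ (mnorm (msym P)) * (mnorm (msym Q)) ^ 2 ≤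
      ∑ i, ∑ j, ∑ k, ∑ l, DS S P k l i j * Q i j * Q k l
  upper : ∀ P : Mat3, msym P ≠ 0 → ∀ i j k l : Fin 3,
    |DS S P k l i j| ≤ κ₁ * phi'' p δ (mnorm (msym P))

/-- The tensor field `F(P) = (δ + |P^sym|)^{(p-2)/2} P^sym` associated to `S`. -/
def Fassoc (p δ : ℝ) (P : Mat3) : Mat3 :=
  (δ + mnorm (msym P)) ^ ((p - 2) / 2) • msym P

/-- The derivative of the shifted N-function: `φ'_a(t) = φ'(a+t)·t/(a+t)`. -/
def phiShift' (p δ a t : ℝ) : ℝ := phi' p δ (a + t) * t / (a + t)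

-- basic mdot lemmas
lemma mdot_eq_prod (A B : Mat3) : mdot A B = ∑ x : Fin 3 × Fin 3, A x.1 x.2 * B x.1 x.2 := by
  rw [mdot, ← Finset.sum_product']
  rfl

lemma mdot_nonneg (A : Mat3) : 0 ≤ mdot A A := by
  rw [mdot_eq_prod]
  exact Finset.sum_nonneg fun x _ => mul_self_nonneg _

lemma mnorm_nonneg (A : Mat3) : 0 ≤ mnorm A := Real.sqrt_nonneg _

lemma mnorm_sq (A : Mat3) : mnorm A ^ 2 = mdot A A := by
  rw [mnorm, Real.sq_sqrt (mdot_nonneg A)]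

lemma mdot_comm (A B : Mat3) : mdot A B = mdot B A := by
  simp [mdot, mul_comm]

lemma mdot_add_left (A B C : Mat3) : mdot (A + B) C = mdot A C + mdot B C := by
  simp [mdot, add_mul, Finset.sum_add_distrib]

lemma mdot_smul_left (c : ℝ) (A B : Mat3) : mdot (c • A) B = c * mdot A B := by
  simp [mdot, Finset.mul_sum, mul_assoc]

lemma mdot_neg_left (A B : Mat3) : mdot (-A) B = -mdot A B := by
  simp [mdot, Finset.sum_neg_distrib]

lemma mnorm_neg (A : Mat3) : mnorm (-A) = mnorm A := by
  rw [mnorm, mnorm, mdot_neg_left, mdot_comm, mdot_neg_left, mdot_comm, neg_neg]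

-- Cauchy-Schwarz
lemma mdot_le (A B : Mat3) : mdot A B ≤ mnorm A * mnorm B := by
  rw [mdot_eq_prod, mnorm, mnorm, mdot_eq_prod, mdot_eq_prod]
  have := Real.sum_mul_le_sqrt_mul_sqrt Finset.univ (fun x : Fin 3 × Fin 3 => A x.1 x.2)
    (fun x => B x.1 x.2)
  simpa [sq] using this

lemma mnorm_add_le (A B : Mat3) : mnorm (A + B) ≤ mnorm A + mnorm B := by
  have h : mdot (A + B) (A + B) ≤ (mnorm A + mnorm B) ^ 2 := by
    have h1 : mdot (A + B) (A + B) = mdot A A + mdot B B + 2 * mdot A B := by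
      rw [mdot_add_left, mdot_comm A (A + B), mdot_comm B (A + B), mdot_add_left, mdot_add_left]
      rw [mdot_comm B A]; ring
    rw [h1]
    have h2 := mdot_le A B
    have := mnorm_sq A; have := mnorm_sq B
    nlinarith [mnorm_nonneg A, mnorm_nonneg B]
  calc mnorm (A + B) = Real.sqrt (mdot (A + B) (A + B)) := rfl
    _ ≤ Real.sqrt ((mnorm A + mnorm B) ^ 2) := Real.sqrt_le_sqrt h
    _ = mnorm A + mnorm B := by
        rw [Real.sqrt_sq (add_nonneg (mnorm_nonneg A) (mnorm_nonneg B))]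

lemma mnorm_smul (c : ℝ) (A : Mat3) : mnorm (c • A) = |c| * mnorm A := by
  have h : mdot (c • A) (c • A) = c ^ 2 * mdot A A := by
    rw [mdot_smul_left, mdot_comm, mdot_smul_left]; ring
  rw [mnorm, h, Real.sqrt_mul (sq_nonneg c), Real.sqrt_sq_eq_abs, mnorm]

lemma mnorm_zero : mnorm 0 = 0 := by simp [mnorm, mdot]

lemma mnorm_eq_zero {A : Mat3} (h : mnorm A = 0) : A = 0 := by
  have h0 : mdot A A = 0 := by
    have := mnorm_sq A; rw [h] at this; simpa using this.symm
  ext i j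
  rw [mdot_eq_prod] at h0
  have := (Finset.sum_eq_zero_iff_of_nonneg (fun x _ => mul_self_nonneg (A x.1 x.2))).1 h0
    (i, j) (Finset.mem_univ _)
  simpa [mul_self_eq_zero] using this

lemma abs_entry_le_mnorm (A : Mat3) (i j : Fin 3) : |A i j| ≤ mnorm A := by
  rw [mnorm, mdot_eq_prod]
  rw [← Real.sqrt_sq_eq_abs]
  apply Real.sqrt_le_sqrt
  have : A i j ^ 2 = A (i,j).1 (i,j).2 * A (i,j).1 (i,j).2 := by ring
  rw [this]
  exact Finset.single_le_sum (f := fun x : Fin 3 × Fin 3 => A x.1 x.2 * A x.1 x.2)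
    (fun x _ => mul_self_nonneg _) (Finset.mem_univ (i,j))

lemma mnorm_le_sum_abs (A : Mat3) : mnorm A ≤ ∑ i, ∑ j, |A i j| := by
  have habs : (∑ i, ∑ j, |A i j|) = ∑ x : Fin 3 × Fin 3, |A x.1 x.2| := by
    rw [← Finset.sum_product']; rfl
  have h : mdot A A ≤ (∑ i, ∑ j, |A i j|) ^ 2 := by
    rw [mdot_eq_prod, habs, sq]
    calc ∑ x : Fin 3 × Fin 3, A x.1 x.2 * A x.1 x.2
        = ∑ x : Fin 3 × Fin 3, |A x.1 x.2| * |A x.1 x.2| := by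
          simp [abs_mul_abs_self]
      _ ≤ ∑ x : Fin 3 × Fin 3, |A x.1 x.2| * (∑ y : Fin 3 × Fin 3, |A y.1 y.2|) := by
          apply Finset.sum_le_sum
          intro x _
          exact mul_le_mul_of_nonneg_left (Finset.single_le_sum
            (f := fun y : Fin 3 × Fin 3 => |A y.1 y.2|) (fun y _ => abs_nonneg _)
            (Finset.mem_univ x)) (abs_nonneg _)
      _ = _ := by rw [← Finset.sum_mul]
  have hnn : 0 ≤ ∑ i, ∑ j, |A i j| := by
    rw [habs]; exact Finset.sum_nonneg fun x _ => abs_nonneg _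
  calc mnorm A ≤ Real.sqrt ((∑ i, ∑ j, |A i j|)^2) := Real.sqrt_le_sqrt h
    _ = _ := Real.sqrt_sq hnn

lemma continuous_entry (i j : Fin 3) : Continuous (fun A : Mat3 => A i j) :=
  (continuous_apply j).comp (continuous_apply i)

lemma continuous_mnorm : Continuous mnorm := by
  apply Real.continuous_sqrt.comp
  unfold mdot
  exact continuous_finset_sum _ fun i _ => continuous_finset_sum _ fun j _ =>
    (continuous_entry i j).mul (continuous_entry i j)

-- msym lemmas
lemma msym_add (A B : Mat3) : msym (A + B) = msym A + msym B := by
  simp [msym, transpose_add]; module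

lemma msym_smul (c : ℝ) (A : Mat3) : msym (c • A) = c • msym A := by
  simp [msym, transpose_smul]; module

lemma msym_sub (A B : Mat3) : msym (A - B) = msym A - msym B := by
  simp [msym, transpose_sub]; module

lemma msym_idem (P : Mat3) : msym (msym P) = msym P := by
  simp [msym, transpose_add, transpose_smul, transpose_transpose]
  module

lemma msym_of_symm {A : Mat3} (h : Aᵀ = A) : msym A = A := by
  rw [msym, h]; module

-- ## Scalar helper lemmas

lemma phi''_bounds {p δ s : ℝ} (hp : 1 < p) (hδ : 0 ≤ δ) (hs : 0 ≤ s) (hpos : 0 < δ + s) :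
    min (p-1) 1 * (δ+s)^(p-2) ≤ phi'' p δ s ∧ phi'' p δ s ≤ max (p-1) 1 * (δ+s)^(p-2) := by
  have hX : (0:ℝ) ≤ (δ+s)^(p-2) := Real.rpow_nonneg hpos.le _
  have h3 : (δ+s)^(p-3) = (δ+s)^(p-2) / (δ+s) := by
    rw [show p-3 = (p-2)-1 by ring, Real.rpow_sub hpos, Real.rpow_one]
  have key : phi'' p δ s = (δ+s)^(p-2) * (1 + (p-2) * (s/(δ+s))) := by
    rw [phi'', h3]; field_simp; ring
  have hr0 : 0 ≤ s/(δ+s) := div_nonneg hs hpos.le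
  have hr1 : s/(δ+s) ≤ 1 := div_le_one_of_le₀ (by linarith) hpos.le
  rw [key]
  constructor
  · apply mul_le_mul_of_nonneg_right ?_ hX |>.trans_eq (mul_comm _ _)
    rcases le_total p 2 with h2 | h2
    · rw [min_eq_left (by linarith)]
      nlinarith
    · rw [min_eq_right (by linarith)]
      nlinarith
  · rw [mul_comm ((δ+s)^(p-2)) _]
    apply mul_le_mul_of_nonneg_right ?_ hX
    rcases le_total p 2 with h2 | h2
    · rw [max_eq_right (by linarith)]
      nlinarith
    · rw [max_eq_left (by linarith)]
      nlinarith

lemma phiShift'_eq {p δ a t : ℝ} (hδ : 0 ≤ δ) (ha : 0 ≤ a) (ht : 0 ≤ t) :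
    phiShift' p δ a t = (δ + a + t)^(p-2) * t := by
  rcases eq_or_lt_of_le ht with h | h
  · simp [phiShift', phi', ← h]
  · have hat : 0 < a + t := by linarith
    rw [phiShift', phi', show δ + (a+t) = δ + a + t by ring]
    field_simp

lemma intervalIntegrable_affine_rpow (r c t A B : ℝ) (hr : -1 < r) (ht : t ≠ 0) :
    IntervalIntegrable (fun θ => (c - t*θ) ^ r) volume A B := by
  have h1 : IntervalIntegrable (fun x : ℝ => x ^ r) volume (c - t*A) (c - t*B) :=
    intervalIntegral.intervalIntegrable_rpow' hr
  have h2 := h1.comp_sub_left c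
  -- h2 : IntervalIntegrable (fun x => (c - x) ^ r) volume (c - (c - t*A)) (c - (c - t*B))
  have h3 := h2.comp_mul_left (c := t)
  simp only [sub_sub_cancel] at h3
  rw [mul_comm t A, mul_comm t B, mul_div_assoc, mul_div_assoc, div_self ht, mul_one, mul_one] at h3
  exact h3

lemma integral_affine_comp (f : ℝ → ℝ) (c t A B : ℝ) (ht : t ≠ 0) :
    ∫ θ in A..B, f (c - t*θ) = t⁻¹ • ∫ x in (c - t*B)..(c - t*A), f x := by
  calc ∫ θ in A..B, f (c - t*θ)
      = t⁻¹ • ∫ y in t*A..t*B, f (c - y) :=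
        intervalIntegral.integral_comp_mul_left (fun y => f (c - y)) ht
    _ = t⁻¹ • ∫ x in (c - t*B)..(c - t*A), f x := by
        rw [intervalIntegral.integral_comp_sub_left (fun x => f x) c]

lemma integral_mono_ae_single {α β θ₀ : ℝ} (hab : α ≤ β) {f g : ℝ → ℝ}
    (hf : IntervalIntegrable f volume α β) (hg : IntervalIntegrable g volume α β)
    (hle : ∀ θ ∈ Set.Icc α β, θ ≠ θ₀ → f θ ≤ g θ) :
    ∫ θ in α..β, f θ ≤ ∫ θ in α..β, g θ := by
  apply intervalIntegral.integral_mono_ae_restrict hab hf hg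
  have h0 : ∀ᵐ (θ : ℝ) ∂(MeasureTheory.volume.restrict (Set.Icc α β)), θ ≠ θ₀ := by
    apply MeasureTheory.ae_restrict_of_ae
    rw [MeasureTheory.ae_iff]
    have : {θ : ℝ | ¬ θ ≠ θ₀} = {θ₀} := by ext x; simp
    rw [this]
    exact Real.volume_singleton
  have h1 : ∀ᵐ (θ : ℝ) ∂(MeasureTheory.volume.restrict (Set.Icc α β)), θ ∈ Set.Icc α β :=
    MeasureTheory.ae_restrict_mem measurableSet_Icc
  filter_upwards [h0, h1] with θ hne hmem using hle θ hmem hne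

lemma integral_rpow_seg {r u v : ℝ} (hr : -1 < r) :
    ∫ x in u..v, x ^ r = (v ^ (r+1) - u ^ (r+1)) / (r+1) :=
  integral_rpow (Or.inl hr)

lemma div_rpow_eq {x c r : ℝ} (hx : 0 ≤ x) (hc : 0 < c) : (x/c)^r = c^(-r) * x^r := by
  rw [Real.div_rpow hx hc.le, div_eq_mul_inv, ← Real.rpow_neg hc.le, mul_comm]

lemma scalar_lower {p δ a t : ℝ} (hp : 1 < p) (hδ : 0 ≤ δ) (ha : 0 ≤ a) (ht : 0 < t)
    {ℓ : ℝ → ℝ}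
    (hpos : ∀ θ ∈ Set.Icc (0:ℝ) 1, 0 < δ + ℓ θ)
    (hcont : ContinuousOn (fun θ => (δ + ℓ θ) ^ (p-2)) (Set.Icc 0 1))
    (hlb : ∀ θ ∈ Set.Icc (0:ℝ) 1, |a - t * θ| ≤ ℓ θ)
    (hub : ∀ θ ∈ Set.Icc (0:ℝ) 1, ℓ θ ≤ a + t * θ) :
    min 1 ((1/4) * 6^(2-p)) * (δ+a+t)^(p-2) ≤ ∫ θ in (0:ℝ)..1, (δ + ℓ θ)^(p-2) := by
  have hsum : 0 < δ + a + t := by linarith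
  have hX : (0:ℝ) ≤ (δ+a+t)^(p-2) := Real.rpow_nonneg hsum.le _
  have hgi : ∀ α β : ℝ, 0 ≤ α → α ≤ β → β ≤ 1 →
      IntervalIntegrable (fun θ => (δ + ℓ θ)^(p-2)) volume α β := by
    intro α β h1 h2 h3
    exact ((hcont.mono (by rw [Set.uIcc_of_le h2]; exact Set.Icc_subset_Icc h1 h3))).intervalIntegrable
  have h6 : ((δ+a+t)/6)^(p-2) = 6^(2-p) * (δ+a+t)^(p-2) := by
    rw [div_rpow_eq hsum.le (by norm_num), neg_sub]
  rcases le_total p 2 with h2 | h2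
  · -- p ≤ 2 : pointwise lower bound by the constant
    have hmono : ∀ θ ∈ Set.Icc (0:ℝ) 1, (δ+a+t)^(p-2) ≤ (δ + ℓ θ)^(p-2) := by
      intro θ hθ
      have h1 := hub θ hθ
      have h2' : t * θ ≤ t := by nlinarith [hθ.1, hθ.2]
      exact Real.rpow_le_rpow_of_nonpos (hpos θ hθ) (by linarith) (by linarith)
    have : (∫ θ in (0:ℝ)..1, (δ+a+t)^(p-2)) ≤ ∫ θ in (0:ℝ)..1, (δ + ℓ θ)^(p-2) :=
      intervalIntegral.integral_mono_on zero_le_one (intervalIntegrable_const)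
        (hgi 0 1 le_rfl zero_le_one le_rfl) hmono
    rw [intervalIntegral.integral_const] at this
    simp only [sub_zero, one_smul] at this
    calc min 1 ((1/4) * 6^(2-p)) * (δ+a+t)^(p-2) ≤ 1 * (δ+a+t)^(p-2) :=
          mul_le_mul_of_nonneg_right (min_le_left _ _) hX
      _ = (δ+a+t)^(p-2) := one_mul _
      _ ≤ _ := this
  · -- 2 ≤ p : integrate over a good quarter-subinterval
    have hnn : ∀ θ ∈ Set.Icc (0:ℝ) 1, 0 ≤ (δ + ℓ θ)^(p-2) := fun θ hθ =>
      Real.rpow_nonneg (hpos θ hθ).le _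
    have key : ∀ α β : ℝ, 0 ≤ α → α ≤ β → β ≤ 1 →
        (∀ θ ∈ Set.Icc α β, ((δ+a+t)/6)^(p-2) ≤ (δ + ℓ θ)^(p-2)) →
        (β - α) * (((δ+a+t)/6)^(p-2)) ≤ ∫ θ in (0:ℝ)..1, (δ + ℓ θ)^(p-2) := by
      intro α β h1 h2 h3 hbd
      have e1 : (∫ θ in α..β, ((δ+a+t)/6)^(p-2)) ≤ ∫ θ in α..β, (δ + ℓ θ)^(p-2) :=
        intervalIntegral.integral_mono_on h2 intervalIntegrable_const (hgi α β h1 h2 h3) hbd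
      rw [intervalIntegral.integral_const, smul_eq_mul] at e1
      have e2 : (∫ θ in (0:ℝ)..α, (δ + ℓ θ)^(p-2)) + ∫ θ in α..β, (δ + ℓ θ)^(p-2)
          = ∫ θ in (0:ℝ)..β, (δ + ℓ θ)^(p-2) :=
        intervalIntegral.integral_add_adjacent_intervals (hgi 0 α le_rfl h1 (by linarith))
          (hgi α β h1 h2 h3)
      have e3 : (∫ θ in (0:ℝ)..β, (δ + ℓ θ)^(p-2)) + ∫ θ in β..1, (δ + ℓ θ)^(p-2)
          = ∫ θ in (0:ℝ)..1, (δ + ℓ θ)^(p-2) :=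
        intervalIntegral.integral_add_adjacent_intervals (hgi 0 β le_rfl (by linarith) h3)
          (hgi β 1 (by linarith) h3 le_rfl)
      have p1 : 0 ≤ ∫ θ in (0:ℝ)..α, (δ + ℓ θ)^(p-2) :=
        intervalIntegral.integral_nonneg h1 (fun u hu => hnn u ⟨hu.1, le_trans hu.2 (by linarith)⟩)
      have p2 : 0 ≤ ∫ θ in β..1, (δ + ℓ θ)^(p-2) :=
        intervalIntegral.integral_nonneg h3 (fun u hu => hnn u ⟨le_trans h1 (le_trans h2 hu.1), hu.2⟩)
      linarith
    have final : (1/4 : ℝ) * (((δ+a+t)/6)^(p-2)) ≤ ∫ θ in (0:ℝ)..1, (δ + ℓ θ)^(p-2) := by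
      rcases le_total t (2*a) with hca | hca
      · -- use [0, 1/4]
        have := key 0 (1/4) le_rfl (by norm_num) (by norm_num) ?_
        · simpa using this
        · intro θ hθ
          have hl := hlb θ ⟨hθ.1, le_trans hθ.2 (by norm_num)⟩
          have h1 : a - t * θ ≤ ℓ θ := (le_abs_self _).trans hl
          have h2' : t * θ ≤ t * (1/4) := by nlinarith [hθ.1, hθ.2]
          apply Real.rpow_le_rpow (by positivity) (by linarith) (by linarith)
      · -- use [3/4, 1]
        have := key (3/4) 1 (by norm_num) (by norm_num) le_rfl ?_
        · have e : (1:ℝ) - 3/4 = 1/4 := by norm_num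
          rw [e] at this; exact this
        · intro θ hθ
          have hl := hlb θ ⟨le_trans (by norm_num) hθ.1, hθ.2⟩
          have h1 : t * θ - a ≤ ℓ θ := by
            have := (neg_le_abs (a - t * θ)).trans hl
            linarith
          have h2' : t * (3/4) ≤ t * θ := by nlinarith [hθ.1, hθ.2]
          apply Real.rpow_le_rpow (by positivity) (by linarith) (by linarith)
    calc min 1 ((1/4) * 6^(2-p)) * (δ+a+t)^(p-2) ≤ ((1/4) * 6^(2-p)) * (δ+a+t)^(p-2) :=
          mul_le_mul_of_nonneg_right (min_le_right _ _) hX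
      _ = (1/4) * (((δ+a+t)/6)^(p-2)) := by rw [h6]; ring
      _ ≤ _ := final

set_option maxHeartbeats 1000000 in
lemma scalar_upper {p δ a t : ℝ} (hp : 1 < p) (hδ : 0 ≤ δ) (ha : 0 ≤ a) (ht : 0 < t)
    {ℓ : ℝ → ℝ}
    (hpos : ∀ θ ∈ Set.Icc (0:ℝ) 1, 0 < δ + ℓ θ)
    (hcont : ContinuousOn (fun θ => (δ + ℓ θ) ^ (p-2)) (Set.Icc 0 1))
    (hlb : ∀ θ ∈ Set.Icc (0:ℝ) 1, |a - t * θ| ≤ ℓ θ)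
    (hub : ∀ θ ∈ Set.Icc (0:ℝ) 1, ℓ θ ≤ a + t * θ) :
    (∫ θ in (0:ℝ)..1, (δ + ℓ θ)^(p-2)) ≤ (1 + (5/(p-1)) * 4^(2-p) + 4^(2-p)) * (δ+a+t)^(p-2) := by
  have hp1 : (0:ℝ) < p - 1 := by linarith
  have hsum : 0 < δ + a + t := by linarith
  have hX : (0:ℝ) ≤ (δ+a+t)^(p-2) := Real.rpow_nonneg hsum.le _
  have h4nn : (0:ℝ) ≤ 4^(2-p) := Real.rpow_nonneg (by norm_num) _
  have hKge : ∀ q : ℝ, 0 ≤ q → q ≤ 1 + (5/(p-1)) * 4^(2-p) + 4^(2-p) →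
      q * (δ+a+t)^(p-2) ≤ (1 + (5/(p-1)) * 4^(2-p) + 4^(2-p)) * (δ+a+t)^(p-2) :=
    fun q _ hq => mul_le_mul_of_nonneg_right hq hX
  have hgi : ∀ α β : ℝ, 0 ≤ α → α ≤ β → β ≤ 1 →
      IntervalIntegrable (fun θ => (δ + ℓ θ)^(p-2)) volume α β := by
    intro α β h1 h2 h3
    exact ((hcont.mono (by rw [Set.uIcc_of_le h2]; exact Set.Icc_subset_Icc h1 h3))).intervalIntegrable
  have hKpos : (0:ℝ) ≤ 5/(p-1) * 4^(2-p) := by positivity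
  rcases le_total p 2 with hple | hpge
  swap
  · -- 2 ≤ p : pointwise upper bound by the constant
    have hmono : ∀ θ ∈ Set.Icc (0:ℝ) 1, (δ + ℓ θ)^(p-2) ≤ (δ+a+t)^(p-2) := by
      intro θ hθ
      have h1 := hub θ hθ
      have h2' : t * θ ≤ t := by nlinarith [hθ.1, hθ.2]
      exact Real.rpow_le_rpow (hpos θ hθ).le (by linarith) (by linarith)
    have hm : (∫ θ in (0:ℝ)..1, (δ + ℓ θ)^(p-2)) ≤ ∫ θ in (0:ℝ)..1, (δ+a+t)^(p-2) :=
      intervalIntegral.integral_mono_on zero_le_one (hgi 0 1 le_rfl zero_le_one le_rfl)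
        intervalIntegrable_const hmono
    rw [intervalIntegral.integral_const] at hm
    simp only [sub_zero, one_smul] at hm
    calc (∫ θ in (0:ℝ)..1, (δ + ℓ θ)^(p-2)) ≤ (δ+a+t)^(p-2) := hm
      _ = 1 * (δ+a+t)^(p-2) := (one_mul _).symm
      _ ≤ _ := hKge 1 zero_le_one (by linarith)
  -- now p ≤ 2
  have hp2 : p - 2 ≤ 0 := by linarith
  by_cases hAD : 2*t ≤ a ∨ t ≤ δ
  · -- easy case : δ + ℓ θ ≥ (δ+a+t)/4 pointwise
    have hmono : ∀ θ ∈ Set.Icc (0:ℝ) 1, (δ + ℓ θ)^(p-2) ≤ ((δ+a+t)/4)^(p-2) := by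
      intro θ hθ
      have hl := hlb θ hθ
      have h1 : a - t * θ ≤ ℓ θ := (le_abs_self _).trans hl
      have h0 : 0 ≤ ℓ θ := (abs_nonneg _).trans hl
      have h2' : t * θ ≤ t := by nlinarith [hθ.1, hθ.2]
      have hq : (δ+a+t)/4 ≤ δ + ℓ θ := by
        rcases hAD with hc | hc
        · linarith
        · linarith
      exact Real.rpow_le_rpow_of_nonpos (by positivity) hq hp2
    have hm : (∫ θ in (0:ℝ)..1, (δ + ℓ θ)^(p-2)) ≤ ∫ θ in (0:ℝ)..1, ((δ+a+t)/4)^(p-2) :=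
      intervalIntegral.integral_mono_on zero_le_one (hgi 0 1 le_rfl zero_le_one le_rfl)
        intervalIntegrable_const hmono
    rw [intervalIntegral.integral_const] at hm
    simp only [sub_zero, one_smul] at hm
    have h4 : ((δ+a+t)/4)^(p-2) = 4^(2-p) * (δ+a+t)^(p-2) := by
      rw [div_rpow_eq hsum.le (by norm_num), neg_sub]
    calc (∫ θ in (0:ℝ)..1, (δ + ℓ θ)^(p-2)) ≤ ((δ+a+t)/4)^(p-2) := hm
      _ = 4^(2-p) * (δ+a+t)^(p-2) := h4
      _ ≤ _ := hKge _ h4nn (by linarith)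
  · -- hard case : a ≤ 2t and δ ≤ t
    push_neg at hAD
    obtain ⟨ha2, hδt⟩ := hAD
    have ha2' : a ≤ 2*t := ha2.le
    have hδt' : δ ≤ t := hδt.le
    have htp : (0:ℝ) ≤ t^(p-2) := Real.rpow_nonneg ht.le _
    have hX4 : t^(p-2) ≤ 4^(2-p) * (δ+a+t)^(p-2) := by
      have h1 : (δ+a+t) ≤ 4*t := by linarith
      have h2' : (4*t)^(p-2) ≤ (δ+a+t)^(p-2) :=
        Real.rpow_le_rpow_of_nonpos hsum h1 hp2
      have h3 : (4*t)^(p-2) = 4^(p-2) * t^(p-2) := Real.mul_rpow (by norm_num) ht.le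
      have h5 : (4:ℝ)^(2-p) * 4^(p-2) = 1 := by
        rw [← Real.rpow_add (by norm_num)]; norm_num
      calc t^(p-2) = (4^(2-p) * 4^(p-2)) * t^(p-2) := by rw [h5, one_mul]
        _ = 4^(2-p) * (4*t)^(p-2) := by rw [h3]; ring
        _ ≤ 4^(2-p) * (δ+a+t)^(p-2) := mul_le_mul_of_nonneg_left h2' h4nn
    have hval : ∀ c α β : ℝ, (∫ θ in α..β, (c - t*θ)^(p-2))
        = t⁻¹ * (((c - t*α)^(p-1) - (c - t*β)^(p-1)) / (p-1)) := by
      intro c α β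
      rw [integral_affine_comp (fun x => x^(p-2)) c t α β ht.ne', smul_eq_mul]
      rw [integral_rpow_seg (by linarith : (-1:ℝ) < p - 2)]
      have e : p - 2 + 1 = p - 1 := by ring
      rw [e]
    have hpow : ∀ m x : ℝ, 1 ≤ m → 0 ≤ x → x ≤ m*t → x^(p-1) ≤ m * (t^(p-2) * t) := by
      intro m x hm hx hxm
      have h1 : x^(p-1) ≤ (m*t)^(p-1) := Real.rpow_le_rpow hx hxm (by linarith)
      have h2' : (m*t)^(p-1) = m^(p-1) * t^(p-1) := Real.mul_rpow (by linarith) ht.le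
      have h3 : m^(p-1) ≤ m := by
        calc m^(p-1) ≤ m^(1:ℝ) := Real.rpow_le_rpow_of_exponent_le hm (by linarith)
          _ = m := Real.rpow_one m
      have h4 : t^(p-1) = t^(p-2) * t := by
        rw [show p-1 = (p-2)+1 by ring, Real.rpow_add ht, Real.rpow_one]
      calc x^(p-1) ≤ m^(p-1) * t^(p-1) := by rw [← h2']; exact h1
        _ ≤ m * t^(p-1) := mul_le_mul_of_nonneg_right h3 (Real.rpow_nonneg ht.le _)
        _ = m * (t^(p-2) * t) := by rw [h4]
    -- a bound for a piece with decreasing affine comparison base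
    have piece : ∀ c α β m : ℝ, 0 ≤ α → α ≤ β → β ≤ 1 → 1 ≤ m →
        0 ≤ c - t*β → c ≤ m*t →
        (∀ θ ∈ Set.Icc α β, θ ≠ c/t → (δ + ℓ θ)^(p-2) ≤ (c - t*θ)^(p-2)) →
        (∫ θ in α..β, (δ + ℓ θ)^(p-2)) ≤ (m/(p-1)) * t^(p-2) := by
      intro c α β m h0 h1 h2' hm hcβ hcm hptw
      have hint : (∫ θ in α..β, (δ + ℓ θ)^(p-2)) ≤ ∫ θ in α..β, (c - t*θ)^(p-2) :=
        integral_mono_ae_single h1 (hgi α β h0 h1 h2')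
          (intervalIntegrable_affine_rpow (p-2) c t α β (by linarith) ht.ne') hptw
      rw [hval c α β] at hint
      have hb1 : (c - t*α)^(p-1) ≤ m * (t^(p-2) * t) :=
        hpow m _ hm (by nlinarith) (by nlinarith)
      have hb3 : (0:ℝ) ≤ (c - t*β)^(p-1) := Real.rpow_nonneg hcβ _
      calc (∫ θ in α..β, (δ + ℓ θ)^(p-2))
          ≤ t⁻¹ * (((c - t*α)^(p-1) - (c - t*β)^(p-1)) / (p-1)) := hint
        _ ≤ t⁻¹ * ((m * (t^(p-2) * t)) / (p-1)) := by
            gcongr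
            linarith
        _ = (m/(p-1)) * t^(p-2) := by field_simp
    -- a bound for a piece with increasing affine comparison base
    have hval2 : ∀ c α β : ℝ, (∫ θ in α..β, (c + t*θ)^(p-2))
        = t⁻¹ * (((c + t*β)^(p-1) - (c + t*α)^(p-1)) / (p-1)) := by
      intro c α β
      have e : (fun θ : ℝ => (c + t*θ)^(p-2)) = (fun θ => (c - (-t)*θ)^(p-2)) := by
        funext θ; congr 1; ring
      rw [e, integral_affine_comp (fun x => x^(p-2)) c (-t) α β (neg_ne_zero.2 ht.ne'),
        smul_eq_mul, integral_rpow_seg (by linarith : (-1:ℝ) < p - 2)]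
      have e2 : p - 2 + 1 = p - 1 := by ring
      rw [e2]
      have e3 : c - -t*α = c + t*α := by ring
      have e4 : c - -t*β = c + t*β := by ring
      rw [e3, e4]
      rw [show (-t)⁻¹ = -t⁻¹ by rw [inv_neg]]
      ring
    have piece2 : ∀ c α β m : ℝ, 0 ≤ α → α ≤ β → β ≤ 1 → 1 ≤ m →
        0 ≤ c + t*α → c + t*β ≤ m*t →
        (∀ θ ∈ Set.Icc α β, θ ≠ (-c)/t → (δ + ℓ θ)^(p-2) ≤ (c + t*θ)^(p-2)) →
        (∫ θ in α..β, (δ + ℓ θ)^(p-2)) ≤ (m/(p-1)) * t^(p-2) := by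
      intro c α β m h0 h1 h2' hm hcα hcm hptw
      have hintg : IntervalIntegrable (fun θ => (c + t*θ)^(p-2)) volume α β := by
        have e : (fun θ : ℝ => (c + t*θ)^(p-2)) = (fun θ => (c - (-t)*θ)^(p-2)) := by
          funext θ; congr 1; ring
        rw [e]
        exact intervalIntegrable_affine_rpow (p-2) c (-t) α β (by linarith)
          (neg_ne_zero.2 ht.ne')
      have hint : (∫ θ in α..β, (δ + ℓ θ)^(p-2)) ≤ ∫ θ in α..β, (c + t*θ)^(p-2) :=
        integral_mono_ae_single h1 (hgi α β h0 h1 h2') hintg hptw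
      rw [hval2 c α β] at hint
      have hb1 : (c + t*β)^(p-1) ≤ m * (t^(p-2) * t) :=
        hpow m _ hm (by nlinarith) (by nlinarith)
      have hb3 : (0:ℝ) ≤ (c + t*α)^(p-1) := Real.rpow_nonneg hcα _
      calc (∫ θ in α..β, (δ + ℓ θ)^(p-2))
          ≤ t⁻¹ * (((c + t*β)^(p-1) - (c + t*α)^(p-1)) / (p-1)) := hint
        _ ≤ t⁻¹ * ((m * (t^(p-2) * t)) / (p-1)) := by
            gcongr
            linarith
        _ = (m/(p-1)) * t^(p-2) := by field_simp
    have hfin : ∀ q : ℝ, 0 ≤ q → q ≤ 5 →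
        (∫ θ in (0:ℝ)..1, (δ + ℓ θ)^(p-2)) ≤ (q/(p-1)) * t^(p-2) →
        (∫ θ in (0:ℝ)..1, (δ + ℓ θ)^(p-2)) ≤
          (1 + (5/(p-1)) * 4^(2-p) + 4^(2-p)) * (δ+a+t)^(p-2) := by
      intro q hq0 hq5 hint
      have h1 : (q/(p-1)) * t^(p-2) ≤ (q/(p-1)) * (4^(2-p) * (δ+a+t)^(p-2)) :=
        mul_le_mul_of_nonneg_left hX4 (by positivity)
      have h2' : (q/(p-1)) * (4^(2-p) * (δ+a+t)^(p-2)) =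
          ((q/(p-1)) * 4^(2-p)) * (δ+a+t)^(p-2) := by ring
      have h3 : (q/(p-1)) * 4^(2-p) ≤ (5/(p-1)) * 4^(2-p) := by
        apply mul_le_mul_of_nonneg_right ?_ h4nn
        gcongr
      calc (∫ θ in (0:ℝ)..1, (δ + ℓ θ)^(p-2)) ≤ (q/(p-1)) * t^(p-2) := hint
        _ ≤ ((q/(p-1)) * 4^(2-p)) * (δ+a+t)^(p-2) := by rw [← h2']; exact h1
        _ ≤ _ := hKge _ (by positivity) (by linarith)
    rcases le_total t a with hta | hat
    · -- t ≤ a ≤ 2t : one decreasing piece on [0,1]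
      apply hfin 3 (by norm_num) (by norm_num)
      apply piece (δ+a) 0 1 3 le_rfl zero_le_one le_rfl (by norm_num)
        (by nlinarith) (by nlinarith)
      intro θ hθ hne
      have hθt : t*θ ≤ t := by nlinarith [hθ.1, hθ.2]
      have hb0 : 0 ≤ δ + a - t*θ := by linarith
      have hbne : δ + a - t*θ ≠ 0 := by
        intro h
        apply hne
        field_simp
        linarith
      have hbpos : 0 < δ + a - t*θ := lt_of_le_of_ne hb0 (Ne.symm hbne)
      have habs : |a - t*θ| = a - t*θ := abs_of_nonneg (by linarith)
      have hle : δ + a - t*θ ≤ δ + ℓ θ := by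
        have := hlb θ hθ; rw [habs] at this; linarith
      exact Real.rpow_le_rpow_of_nonpos hbpos hle hp2
    · -- a ≤ t : split at a/t
      have hθs0 : 0 ≤ a/t := div_nonneg ha ht.le
      have hθs1 : a/t ≤ 1 := (div_le_one ht).2 hat
      have hta' : t * (a/t) = a := by field_simp
      have hsplit : (∫ θ in (0:ℝ)..(a/t), (δ + ℓ θ)^(p-2)) +
          (∫ θ in (a/t)..1, (δ + ℓ θ)^(p-2)) = ∫ θ in (0:ℝ)..1, (δ + ℓ θ)^(p-2) :=
        intervalIntegral.integral_add_adjacent_intervals (hgi 0 (a/t) le_rfl hθs0 hθs1)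
          (hgi (a/t) 1 hθs0 hθs1 le_rfl)
      have hI1 : (∫ θ in (0:ℝ)..(a/t), (δ + ℓ θ)^(p-2)) ≤ (2/(p-1)) * t^(p-2) := by
        apply piece (δ+a) 0 (a/t) 2 le_rfl hθs0 hθs1 (by norm_num)
          (by rw [hta']; linarith) (by linarith)
        intro θ hθ hne
        have hθt : t*θ ≤ a := by
          have h := mul_le_mul_of_nonneg_left hθ.2 ht.le
          rw [hta'] at h; exact h
        have hb0 : 0 ≤ δ + a - t*θ := by linarith
        have hbne : δ + a - t*θ ≠ 0 := by
          intro h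
          apply hne
          field_simp
          linarith
        have hbpos : 0 < δ + a - t*θ := lt_of_le_of_ne hb0 (Ne.symm hbne)
        have habs : |a - t*θ| = a - t*θ := abs_of_nonneg (by linarith)
        have hle : δ + a - t*θ ≤ δ + ℓ θ := by
          have := hlb θ ⟨hθ.1, le_trans hθ.2 hθs1⟩; rw [habs] at this; linarith
        exact Real.rpow_le_rpow_of_nonpos hbpos hle hp2
      have hI2 : (∫ θ in (a/t)..1, (δ + ℓ θ)^(p-2)) ≤ (2/(p-1)) * t^(p-2) := by
        apply piece2 (δ-a) (a/t) 1 2 hθs0 hθs1 le_rfl (by norm_num)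
          (by rw [hta']; linarith) (by linarith)
        intro θ hθ hne
        have hθt : a ≤ t*θ := by
          have h := mul_le_mul_of_nonneg_left hθ.1 ht.le
          rw [hta'] at h; exact h
        have hb0 : 0 ≤ δ - a + t*θ := by linarith
        have hbne : δ - a + t*θ ≠ 0 := by
          intro h
          apply hne
          field_simp
          linarith
        have hbpos : 0 < δ - a + t*θ := lt_of_le_of_ne hb0 (Ne.symm hbne)
        have habs : |a - t*θ| = t*θ - a := by
          rw [abs_of_nonpos (by linarith)]; ring
        have hle : δ - a + t*θ ≤ δ + ℓ θ := by
          have := hlb θ ⟨le_trans hθs0 hθ.1, hθ.2⟩; rw [habs] at this; linarith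
        exact Real.rpow_le_rpow_of_nonpos hbpos hle hp2
      apply hfin 4 (by norm_num) (by norm_num)
      rw [← hsplit]
      have e : (4:ℝ)/(p-1) * t^(p-2) = (2/(p-1)) * t^(p-2) + (2/(p-1)) * t^(p-2) := by ring
      rw [e]
      exact add_le_add hI1 hI2



lemma mnorm_pos {A : Mat3} (h : A ≠ 0) : 0 < mnorm A :=
  lt_of_le_of_ne (mnorm_nonneg A) (fun h0 => h (mnorm_eq_zero h0.symm))

lemma clm_entry_sum (L : Mat3 →L[ℝ] Mat3) (M : Mat3) (i j : Fin 3) :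
    L M i j = ∑ k, ∑ l, M k l * L (single k l 1) i j := by
  have h : L M = ∑ k : Fin 3, ∑ l : Fin 3, M k l • L (single k l 1) := by
    calc L M = L (∑ k : Fin 3, ∑ l : Fin 3, single k l (M k l)) := by
          rw [← matrix_eq_sum_single]
      _ = ∑ k : Fin 3, ∑ l : Fin 3, L (single k l (M k l)) := by
          rw [map_sum]
          exact Finset.sum_congr rfl fun k _ => map_sum L _ _
      _ = ∑ k : Fin 3, ∑ l : Fin 3, M k l • L (single k l 1) := by
          refine Finset.sum_congr rfl fun k _ => Finset.sum_congr rfl fun l _ => ?_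
          rw [← _root_.map_smul]
          congr 1
          rw [smul_single]
          norm_num
  rw [h]
  rw [Matrix.sum_apply]
  refine Finset.sum_congr rfl fun k _ => ?_
  rw [Matrix.sum_apply]
  refine Finset.sum_congr rfl fun l _ => ?_
  rw [Matrix.smul_apply, smul_eq_mul]

set_option maxHeartbeats 2000000 in
lemma core_good {p δ κ₀ κ₁ : ℝ} (hp : 1 < p) (hκ₀ : 0 < κ₀) (hκ₁ : 0 < κ₁) (hδ : 0 ≤ δ)
    {S : Mat3 → Mat3} (hS : PDelta p δ κ₀ κ₁ S) {A B : Mat3}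
    (hA : Aᵀ = A) (hB : Bᵀ = B) (hAB : A ≠ B)
    (hseg : ∀ θ ∈ Set.Icc (0:ℝ) 1, A + θ • (B - A) ≠ 0) :
    κ₀ * min (p-1) 1 * min 1 ((1/4) * 6^(2-p)) *
        ((δ + mnorm A + mnorm (A - B))^(p-2) * mnorm (A - B)) ≤ mnorm (S A - S B) ∧
    mnorm (S A - S B) ≤ 81 * κ₁ * max (p-1) 1 * (1 + (5/(p-1)) * 4^(2-p) + 4^(2-p)) *
        ((δ + mnorm A + mnorm (A - B))^(p-2) * mnorm (A - B)) := by
  set D := B - A with hD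
  have hDsym : Dᵀ = D := by rw [hD, transpose_sub, hA, hB]
  have hDne : D ≠ 0 := sub_ne_zero.2 (Ne.symm hAB)
  set a := mnorm A with ha'
  have hEq : mnorm (A - B) = mnorm D := by rw [show A - B = -D from (neg_sub B A).symm, mnorm_neg]
  set t := mnorm D with ht'
  have ht : 0 < t := mnorm_pos hDne
  have ha : 0 ≤ a := mnorm_nonneg A
  set γ : ℝ → Mat3 := fun θ => A + θ • D with hγ'
  set ℓ : ℝ → ℝ := fun θ => mnorm (γ θ) with hℓ'
  have hγsym : ∀ θ : ℝ, (γ θ)ᵀ = γ θ := by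
    intro θ
    show (A + θ • D)ᵀ = A + θ • D
    simp only [transpose_add, transpose_smul, hA, hDsym]
  have hγmsym : ∀ θ : ℝ, msym (γ θ) = γ θ := fun θ => msym_of_symm (hγsym θ)
  have hγne : ∀ θ ∈ Set.Icc (0:ℝ) 1, γ θ ≠ 0 := hseg
  have hpos : ∀ θ ∈ Set.Icc (0:ℝ) 1, 0 < δ + ℓ θ := by
    intro θ hθ
    have := mnorm_pos (hγne θ hθ)
    have h0 : 0 < ℓ θ := this
    linarith
  have hγc : Continuous γ := continuous_const.add (continuous_id.smul continuous_const)
  have hℓc : Continuous ℓ := continuous_mnorm.comp hγc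
  have hgcont : ContinuousOn (fun θ => (δ + ℓ θ)^(p-2)) (Set.Icc 0 1) := by
    apply ContinuousOn.rpow_const ((continuous_const.add hℓc).continuousOn)
    intro θ hθ
    exact Or.inl (hpos θ hθ).ne'
  have hub : ∀ θ ∈ Set.Icc (0:ℝ) 1, ℓ θ ≤ a + t * θ := by
    intro θ hθ
    have h1 : ℓ θ ≤ mnorm A + mnorm (θ • D) := mnorm_add_le A (θ • D)
    rw [mnorm_smul, abs_of_nonneg hθ.1] at h1
    calc ℓ θ ≤ a + θ * t := h1
      _ = a + t * θ := by ring
  have hlb : ∀ θ ∈ Set.Icc (0:ℝ) 1, |a - t * θ| ≤ ℓ θ := by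
    intro θ hθ
    have e1 : A = γ θ + (-(θ • D)) := by show A = A + θ • D + (-(θ • D)); abel
    have h1 : a ≤ ℓ θ + θ * t := by
      calc a = mnorm (γ θ + (-(θ • D))) := by rw [← e1]
        _ ≤ ℓ θ + mnorm (-(θ • D)) := mnorm_add_le _ _
        _ = ℓ θ + θ * t := by rw [mnorm_neg, mnorm_smul, abs_of_nonneg hθ.1]
    have e2 : θ • D = γ θ + (-A) := by show θ • D = A + θ • D + (-A); abel
    have h2 : θ * t ≤ ℓ θ + a := by
      calc θ * t = mnorm (θ • D) := by rw [mnorm_smul, abs_of_nonneg hθ.1]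
        _ = mnorm (γ θ + (-A)) := by rw [← e2]
        _ ≤ ℓ θ + mnorm (-A) := mnorm_add_le _ _
        _ = ℓ θ + a := by rw [mnorm_neg]
    rw [abs_le]
    constructor <;> nlinarith []
  -- derivative of S along the segment
  have hdiff : ∀ θ ∈ Set.uIcc (0:ℝ) 1,
      HasDerivAt (fun u => S (γ u)) ((fderiv ℝ S (γ θ)) D) θ := by
    intro θ hθ
    rw [Set.uIcc_of_le zero_le_one] at hθ
    have hSd : DifferentiableAt ℝ S (γ θ) :=
      (hS.smooth.differentiableOn one_ne_zero).differentiableAt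
        (isOpen_compl_singleton.mem_nhds (hγne θ hθ))
    have hγd : HasDerivAt γ D θ := by
      have h1 : HasDerivAt (fun u : ℝ => u • D) ((1:ℝ) • D) θ := (hasDerivAt_id θ).smul_const D
      rw [one_smul] at h1
      exact h1.const_add A
    exact hSd.hasFDerivAt.comp_hasDerivAt θ hγd
  have hdiffij : ∀ (i j : Fin 3), ∀ θ ∈ Set.uIcc (0:ℝ) 1,
      HasDerivAt (fun u => S (γ u) i j) ((fderiv ℝ S (γ θ)) D i j) θ := by
    intro i j θ hθ
    have h := hdiff θ hθ
    have h1 := hasDerivAt_pi.1 h i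
    exact hasDerivAt_pi.1 h1 j
  -- continuity of the derivative
  have hcontD : ContinuousOn (fun θ => (fderiv ℝ S (γ θ)) D) (Set.Icc (0:ℝ) 1) := by
    have h1 : ContinuousOn (fderiv ℝ S) {(0:Mat3)}ᶜ :=
      hS.smooth.continuousOn_fderiv_of_isOpen isOpen_compl_singleton le_rfl
    have h2 : ContinuousOn (fun θ => fderiv ℝ S (γ θ)) (Set.Icc (0:ℝ) 1) :=
      h1.comp hγc.continuousOn (fun θ hθ => hγne θ hθ)
    exact h2.clm_apply continuousOn_const
  have hcij : ∀ (i j : Fin 3),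
      ContinuousOn (fun θ => (fderiv ℝ S (γ θ)) D i j) (Set.Icc (0:ℝ) 1) := by
    intro i j
    exact ((continuous_apply j).comp (continuous_apply i)).comp_continuousOn hcontD
  have hintij : ∀ (i j : Fin 3),
      IntervalIntegrable (fun θ => (fderiv ℝ S (γ θ)) D i j) volume 0 1 := by
    intro i j
    exact ((hcij i j).mono (by rw [Set.uIcc_of_le zero_le_one])).intervalIntegrable
  -- fundamental theorem of calculus per entry
  have hftc : ∀ (i j : Fin 3),
      S B i j - S A i j = ∫ θ in (0:ℝ)..1, (fderiv ℝ S (γ θ)) D i j := by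
    intro i j
    have h := intervalIntegral.integral_eq_sub_of_hasDerivAt (hdiffij i j) (hintij i j)
    have e0 : γ 0 = A := by show A + (0:ℝ) • D = A; simp
    have e1 : γ 1 = B := by show A + (1:ℝ) • D = B; rw [one_smul, hD]; abel
    rw [e0, e1] at h
    exact h.symm
  -- constants
  have hminnn : (0:ℝ) ≤ min (p-1) 1 := le_min (by linarith) zero_le_one
  have hm2 : (0:ℝ) < max (p-1) 1 := lt_of_lt_of_le one_pos (le_max_right _ _)
  set X := (δ + a + t)^(p-2) with hX'
  have hXnn : (0:ℝ) ≤ X := Real.rpow_nonneg (by linarith) _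
  set I := ∫ θ in (0:ℝ)..1, (δ + ℓ θ)^(p-2) with hI'
  have hIint : IntervalIntegrable (fun θ => (δ + ℓ θ)^(p-2)) volume 0 1 :=
    (hgcont.mono (by rw [Set.uIcc_of_le zero_le_one])).intervalIntegrable
  have hIup : I ≤ (1 + (5/(p-1)) * 4^(2-p) + 4^(2-p)) * X :=
    scalar_upper hp hδ ha ht hpos hgcont hlb hub
  have hIlow : min 1 ((1/4) * 6^(2-p)) * X ≤ I :=
    scalar_lower hp hδ ha ht hpos hgcont hlb hub
  -- pointwise entry bound
  set c₂ := 9 * t * (κ₁ * max (p-1) 1) with hc₂'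
  have hc₂nn : 0 ≤ c₂ := by positivity
  have hentry : ∀ (i j : Fin 3), ∀ θ ∈ Set.Icc (0:ℝ) 1,
      |(fderiv ℝ S (γ θ)) D i j| ≤ c₂ * (δ + ℓ θ)^(p-2) := by
    intro i j θ hθ
    have hphi := phi''_bounds (p := p) (δ := δ) (s := ℓ θ) hp hδ (mnorm_nonneg _) (hpos θ hθ)
    have hDS : ∀ k l : Fin 3, |DS S (γ θ) k l i j| ≤ κ₁ * phi'' p δ (ℓ θ) := by
      intro k l
      have h := hS.upper (γ θ) (by rw [hγmsym]; exact hγne θ hθ) i j k l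
      rw [hγmsym] at h
      exact h
    calc |(fderiv ℝ S (γ θ)) D i j|
        = |∑ k, ∑ l, D k l * DS S (γ θ) k l i j| := by
          rw [clm_entry_sum (fderiv ℝ S (γ θ)) D i j]; rfl
      _ ≤ ∑ k, ∑ l, |D k l * DS S (γ θ) k l i j| :=
          le_trans (Finset.abs_sum_le_sum_abs _ _)
            (Finset.sum_le_sum fun k _ => Finset.abs_sum_le_sum_abs _ _)
      _ ≤ ∑ k : Fin 3, ∑ l : Fin 3, t * (κ₁ * phi'' p δ (ℓ θ)) := by
          refine Finset.sum_le_sum fun k _ => Finset.sum_le_sum fun l _ => ?_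
          rw [abs_mul]
          apply mul_le_mul (abs_entry_le_mnorm D k l) (hDS k l) (abs_nonneg _) ht.le
      _ = 9 * t * (κ₁ * phi'' p δ (ℓ θ)) := by
          simp [Finset.sum_const]; ring
      _ ≤ c₂ * (δ + ℓ θ)^(p-2) := by
          have h1 : κ₁ * phi'' p δ (ℓ θ) ≤ κ₁ * (max (p-1) 1 * (δ + ℓ θ)^(p-2)) :=
            mul_le_mul_of_nonneg_left hphi.2 hκ₁.le
          have h2 : (0:ℝ) ≤ 9 * t := by positivity
          have h3 := mul_le_mul_of_nonneg_left h1 h2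
          calc 9 * t * (κ₁ * phi'' p δ (ℓ θ))
              ≤ 9 * t * (κ₁ * (max (p-1) 1 * (δ + ℓ θ)^(p-2))) := h3
            _ = c₂ * (δ + ℓ θ)^(p-2) := by rw [hc₂']; ring
  -- upper bound
  have hup : mnorm (S A - S B) ≤ 81 * κ₁ * max (p-1) 1 *
      (1 + (5/(p-1)) * 4^(2-p) + 4^(2-p)) * (X * t) := by
    have hent : ∀ (i j : Fin 3), |S B i j - S A i j| ≤ c₂ * I := by
      intro i j
      rw [hftc i j]
      calc |∫ θ in (0:ℝ)..1, (fderiv ℝ S (γ θ)) D i j|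
          ≤ ∫ θ in (0:ℝ)..1, |(fderiv ℝ S (γ θ)) D i j| :=
            intervalIntegral.abs_integral_le_integral_abs zero_le_one
        _ ≤ ∫ θ in (0:ℝ)..1, c₂ * (δ + ℓ θ)^(p-2) := by
            apply intervalIntegral.integral_mono_on zero_le_one
              ((hcij i j).abs.mono (by rw [Set.uIcc_of_le zero_le_one])).intervalIntegrable
              (hIint.const_mul c₂)
            exact hentry i j
        _ = c₂ * I := intervalIntegral.integral_const_mul c₂ _
    have hsum : mnorm (S A - S B) ≤ ∑ i : Fin 3, ∑ j : Fin 3, |(S A - S B) i j| :=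
      mnorm_le_sum_abs _
    have hsum2 : (∑ i : Fin 3, ∑ j : Fin 3, |(S A - S B) i j|) ≤ 9 * (c₂ * I) := by
      calc (∑ i : Fin 3, ∑ j : Fin 3, |(S A - S B) i j|)
          ≤ ∑ i : Fin 3, ∑ j : Fin 3, c₂ * I := by
            refine Finset.sum_le_sum fun i _ => Finset.sum_le_sum fun j _ => ?_
            have e : (S A - S B) i j = S A i j - S B i j := by
              simp [Matrix.sub_apply]
            rw [e, abs_sub_comm]
            exact hent i j
        _ = 9 * (c₂ * I) := by simp [Finset.sum_const]; ring
    have hIK := mul_le_mul_of_nonneg_left hIup (by positivity : (0:ℝ) ≤ 9 * c₂)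
    calc mnorm (S A - S B) ≤ 9 * (c₂ * I) := le_trans hsum hsum2
      _ = 9 * c₂ * I := by ring
      _ ≤ 9 * c₂ * ((1 + (5/(p-1)) * 4^(2-p) + 4^(2-p)) * X) := hIK
      _ = 81 * κ₁ * max (p-1) 1 * (1 + (5/(p-1)) * 4^(2-p) + 4^(2-p)) * (X * t) := by
          rw [hc₂']; ring
  -- lower bound
  have hlow : κ₀ * min (p-1) 1 * min 1 ((1/4) * 6^(2-p)) * (X * t) ≤ mnorm (S A - S B) := by
    have hlowptw : ∀ θ ∈ Set.Icc (0:ℝ) 1,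
        (κ₀ * (min (p-1) 1 * t^2)) * (δ + ℓ θ)^(p-2) ≤
          ∑ i, ∑ j, ((fderiv ℝ S (γ θ)) D i j) * D i j := by
      intro θ hθ
      have hphi := phi''_bounds (p := p) (δ := δ) (s := ℓ θ) hp hδ (mnorm_nonneg _) (hpos θ hθ)
      have hlow0 := hS.lower (γ θ) D (by rw [hγmsym]; exact hγne θ hθ)
      rw [hγmsym, msym_of_symm hDsym] at hlow0
      have hsum : (∑ i, ∑ j, ((fderiv ℝ S (γ θ)) D i j) * D i j) =
          ∑ i, ∑ j, ∑ k, ∑ l, DS S (γ θ) k l i j * D i j * D k l := by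
        refine Finset.sum_congr rfl fun i _ => Finset.sum_congr rfl fun j _ => ?_
        rw [clm_entry_sum (fderiv ℝ S (γ θ)) D i j, Finset.sum_mul]
        refine Finset.sum_congr rfl fun k _ => ?_
        rw [Finset.sum_mul]
        refine Finset.sum_congr rfl fun l _ => ?_
        show D k l * DS S (γ θ) k l i j * D i j = _
        ring
      rw [hsum]
      refine le_trans ?_ hlow0
      have h1 : (0:ℝ) ≤ κ₀ * t^2 := by positivity
      have h2 := mul_le_mul_of_nonneg_left hphi.1 h1
      calc (κ₀ * (min (p-1) 1 * t^2)) * (δ + ℓ θ)^(p-2)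
          = κ₀ * t^2 * (min (p-1) 1 * (δ + ℓ θ)^(p-2)) := by ring
        _ ≤ κ₀ * t^2 * phi'' p δ (ℓ θ) := h2
        _ = κ₀ * phi'' p δ (ℓ θ) * t^2 := by ring
    have hFcont : ContinuousOn (fun θ => ∑ i, ∑ j, ((fderiv ℝ S (γ θ)) D i j) * D i j)
        (Set.Icc (0:ℝ) 1) := by
      apply continuousOn_finset_sum
      intro i _
      apply continuousOn_finset_sum
      intro j _
      exact (hcij i j).mul continuousOn_const
    have hFint : IntervalIntegrable (fun θ => ∑ i, ∑ j, ((fderiv ℝ S (γ θ)) D i j) * D i j)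
        volume 0 1 :=
      (hFcont.mono (by rw [Set.uIcc_of_le zero_le_one])).intervalIntegrable
    have hmono : (∫ θ in (0:ℝ)..1, (κ₀ * (min (p-1) 1 * t^2)) * (δ + ℓ θ)^(p-2)) ≤
        ∫ θ in (0:ℝ)..1, ∑ i, ∑ j, ((fderiv ℝ S (γ θ)) D i j) * D i j :=
      intervalIntegral.integral_mono_on zero_le_one (hIint.const_mul _) hFint hlowptw
    rw [intervalIntegral.integral_const_mul] at hmono
    have hswap : (∫ θ in (0:ℝ)..1, ∑ i, ∑ j, ((fderiv ℝ S (γ θ)) D i j) * D i j) =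
        ∑ i : Fin 3, ∑ j : Fin 3, (∫ θ in (0:ℝ)..1, (fderiv ℝ S (γ θ)) D i j) * D i j := by
      have h1 : (∫ θ in (0:ℝ)..1, ∑ i : Fin 3, (∑ j : Fin 3, ((fderiv ℝ S (γ θ)) D i j) * D i j))
          = ∑ i : Fin 3, ∫ θ in (0:ℝ)..1, ∑ j : Fin 3, ((fderiv ℝ S (γ θ)) D i j) * D i j :=
        intervalIntegral.integral_finset_sum
          (f := fun i => fun θ => ∑ j : Fin 3, ((fderiv ℝ S (γ θ)) D i j) * D i j)
          (fun i _ => IntervalIntegrable.sum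
            (f := fun j => fun θ => ((fderiv ℝ S (γ θ)) D i j) * D i j) Finset.univ
            (fun j _ => (hintij i j).mul_const _))
      have h2 : ∀ i : Fin 3, (∫ θ in (0:ℝ)..1, ∑ j : Fin 3, ((fderiv ℝ S (γ θ)) D i j) * D i j)
          = ∑ j : Fin 3, (∫ θ in (0:ℝ)..1, ((fderiv ℝ S (γ θ)) D i j) * D i j) :=
        fun i => intervalIntegral.integral_finset_sum
          (f := fun j => fun θ => ((fderiv ℝ S (γ θ)) D i j) * D i j)
          (fun j _ => (hintij i j).mul_const _)
      have h3 : ∀ i j : Fin 3, (∫ θ in (0:ℝ)..1, ((fderiv ℝ S (γ θ)) D i j) * D i j)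
          = (∫ θ in (0:ℝ)..1, (fderiv ℝ S (γ θ)) D i j) * D i j :=
        fun i j => intervalIntegral.integral_mul_const (D i j) _
      rw [h1]
      exact Finset.sum_congr rfl fun i _ => by
        rw [h2 i]
        exact Finset.sum_congr rfl fun j _ => h3 i j
    have hmdot : mdot (S B - S A) D =
        ∑ i : Fin 3, ∑ j : Fin 3, (∫ θ in (0:ℝ)..1, (fderiv ℝ S (γ θ)) D i j) * D i j := by
      rw [mdot]
      refine Finset.sum_congr rfl fun i _ => Finset.sum_congr rfl fun j _ => ?_
      have e : (S B - S A) i j = S B i j - S A i j := by simp [Matrix.sub_apply]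
      rw [e, hftc i j]
    have hcs : mdot (S B - S A) D ≤ mnorm (S A - S B) * t := by
      have h1 := mdot_le (S B - S A) D
      have e : mnorm (S B - S A) = mnorm (S A - S B) := by
        rw [show S B - S A = -(S A - S B) from (neg_sub (S A) (S B)).symm, mnorm_neg]
      rw [e] at h1
      exact h1
    have hchain : κ₀ * (min (p-1) 1 * t^2) * I ≤ mnorm (S A - S B) * t := by
      rw [hmdot] at hcs
      rw [hswap] at hmono
      linarith
    have hc0nn : 0 ≤ κ₀ * (min (p-1) 1 * t^2) := by positivity
    have h1 : κ₀ * (min (p-1) 1 * t^2) * (min 1 ((1/4) * 6^(2-p)) * X) ≤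
        κ₀ * (min (p-1) 1 * t^2) * I := by
      exact mul_le_mul_of_nonneg_left hIlow hc0nn
    have hfin : (κ₀ * min (p-1) 1 * min 1 ((1/4) * 6^(2-p)) * (X * t)) * t ≤
        mnorm (S A - S B) * t := by
      calc (κ₀ * min (p-1) 1 * min 1 ((1/4) * 6^(2-p)) * (X * t)) * t
          = κ₀ * (min (p-1) 1 * t^2) * (min 1 ((1/4) * 6^(2-p)) * X) := by ring
        _ ≤ κ₀ * (min (p-1) 1 * t^2) * I := h1
        _ ≤ mnorm (S A - S B) * t := hchain
    exact le_of_mul_le_mul_right hfin ht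
  rw [hEq]
  exact ⟨hlow, hup⟩

lemma msym_transpose (P : Mat3) : (msym P)ᵀ = msym P := by
  rw [msym]
  rw [transpose_smul, transpose_add, transpose_transpose]
  rw [add_comm]

lemma exists_U {D : Mat3} (hD : D ≠ 0) :
    ∃ U : Mat3, Uᵀ = U ∧ ∀ c : ℝ, U ≠ c • D := by
  by_cases hE : ∀ c : ℝ, (single (0:Fin 3) (0:Fin 3) (1:ℝ)) ≠ c • D
  · refine ⟨single 0 0 1, ?_, hE⟩
    ext i j
    simp [Matrix.transpose_apply, Matrix.single, and_comm]
  · push_neg at hE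
    obtain ⟨c₁, hc₁⟩ := hE
    have hc₁0 : c₁ ≠ 0 := by
      intro h
      rw [h, zero_smul] at hc₁
      have := congrFun (congrFun hc₁ 0) 0
      simp [Matrix.single] at this
    refine ⟨single 1 1 1, ?_, ?_⟩
    · ext i j
      simp [Matrix.transpose_apply, Matrix.single, and_comm]
    · intro c₂ h
      have hD' : D = c₁⁻¹ • single 0 0 1 := by
        rw [hc₁, smul_smul, inv_mul_cancel₀ hc₁0, one_smul]
      rw [hD', smul_smul] at h
      have h11 := congrFun (congrFun h 1) 1
      simp [Matrix.single, Matrix.smul_apply] at h11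

set_option maxHeartbeats 1000000 in
lemma core_all {p δ κ₀ κ₁ : ℝ} (hp : 1 < p) (hκ₀ : 0 < κ₀) (hκ₁ : 0 < κ₁) (hδ : 0 ≤ δ)
    {S : Mat3 → Mat3} (hS : PDelta p δ κ₀ κ₁ S) {A B : Mat3}
    (hA : Aᵀ = A) (hB : Bᵀ = B) :
    κ₀ * min (p-1) 1 * min 1 ((1/4) * 6^(2-p)) *
        ((δ + mnorm A + mnorm (A - B))^(p-2) * mnorm (A - B)) ≤ mnorm (S A - S B) ∧
    mnorm (S A - S B) ≤ 81 * κ₁ * max (p-1) 1 * (1 + (5/(p-1)) * 4^(2-p) + 4^(2-p)) *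
        ((δ + mnorm A + mnorm (A - B))^(p-2) * mnorm (A - B)) := by
  by_cases hAB : A = B
  · subst hAB
    simp [sub_self, mnorm_zero]
  by_cases hseg : ∀ θ ∈ Set.Icc (0:ℝ) 1, A + θ • (B - A) ≠ 0
  · exact core_good hp hκ₀ hκ₁ hδ hS hA hB hAB hseg
  -- the segment hits zero : perturb
  push_neg at hseg
  obtain ⟨θ₀, hθ₀, h0⟩ := hseg
  set D := B - A with hD
  have hDne : D ≠ 0 := sub_ne_zero.2 (Ne.symm hAB)
  have hA0 : A = -(θ₀ • D) := by
    rw [eq_neg_iff_add_eq_zero]; exact h0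
  obtain ⟨U, hUsym, hU⟩ := exists_U hDne
  set T := mnorm (A - B) with hT'
  have hTpos : 0 < T := mnorm_pos (sub_ne_zero.2 hAB)
  set e : ℕ → ℝ := fun n => 1/(n+1) with he'
  have hepos : ∀ n : ℕ, 0 < e n := fun n => by positivity
  -- perturbed estimates
  have hkey : ∀ n : ℕ,
      κ₀ * min (p-1) 1 * min 1 ((1/4) * 6^(2-p)) *
          ((δ + mnorm (A + e n • U) + T)^(p-2) * T) ≤
        mnorm (S (A + e n • U) - S (B + e n • U)) ∧
      mnorm (S (A + e n • U) - S (B + e n • U)) ≤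
        81 * κ₁ * max (p-1) 1 * (1 + (5/(p-1)) * 4^(2-p) + 4^(2-p)) *
          ((δ + mnorm (A + e n • U) + T)^(p-2) * T) := by
    intro n
    have hsub : (A + e n • U) - (B + e n • U) = A - B := by abel
    have hAn : (A + e n • U)ᵀ = A + e n • U := by
      rw [transpose_add, transpose_smul, hA, hUsym]
    have hBn : (B + e n • U)ᵀ = B + e n • U := by
      rw [transpose_add, transpose_smul, hB, hUsym]
    have hABn : A + e n • U ≠ B + e n • U := by
      intro h
      apply hAB
      have := congrArg (fun X => X - e n • U) h
      simpa using this
    have hsegn : ∀ θ ∈ Set.Icc (0:ℝ) 1,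
        (A + e n • U) + θ • ((B + e n • U) - (A + e n • U)) ≠ 0 := by
      intro θ _ hzero
      have hBA : (B + e n • U) - (A + e n • U) = D := by rw [hD]; abel
      rw [hBA] at hzero
      have h1 : e n • U = (θ₀ - θ) • D := by
        have h2 : A + θ • D = (θ - θ₀) • D := by
          rw [hA0, sub_smul]; abel
      -- hzero : A + e n • U + θ • D = 0
        have h3 : (θ - θ₀) • D + e n • U = 0 := by
          rw [← h2]
          rw [← hzero]; abel
        have h4 : e n • U = -((θ - θ₀) • D) := by
          rw [eq_neg_iff_add_eq_zero, add_comm]; exact h3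
        rw [h4, ← neg_smul]
        congr 1
        ring
      apply hU ((e n)⁻¹ * (θ₀ - θ))
      rw [← smul_smul, ← h1, inv_smul_smul₀ (hepos n).ne']
    have h := core_good hp hκ₀ hκ₁ hδ hS hAn hBn hABn hsegn
    rw [hsub] at h
    exact h
  -- pass to the limit n → ∞
  have he0 : Filter.Tendsto e Filter.atTop (nhds 0) := by
    rw [he']
    exact tendsto_one_div_add_atTop_nhds_zero_nat
  have htendA : Filter.Tendsto (fun n => A + e n • U) Filter.atTop (nhds A) := by
    have h1 : Filter.Tendsto (fun n => e n • U) Filter.atTop (nhds ((0:ℝ) • U)) :=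
      he0.smul_const U
    rw [zero_smul] at h1
    have h2 := (tendsto_const_nhds (x := A) (f := Filter.atTop)).add h1
    rw [add_zero] at h2
    exact h2
  have htendB : Filter.Tendsto (fun n => B + e n • U) Filter.atTop (nhds B) := by
    have h1 : Filter.Tendsto (fun n => e n • U) Filter.atTop (nhds ((0:ℝ) • U)) :=
      he0.smul_const U
    rw [zero_smul] at h1
    have h2 := (tendsto_const_nhds (x := B) (f := Filter.atTop)).add h1
    rw [add_zero] at h2
    exact h2
  have htendS : Filter.Tendsto (fun n => mnorm (S (A + e n • U) - S (B + e n • U)))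
      Filter.atTop (nhds (mnorm (S A - S B))) := by
    have h1 := (hS.cont.tendsto A).comp htendA
    have h2 := (hS.cont.tendsto B).comp htendB
    exact (continuous_mnorm.tendsto _).comp (h1.sub h2)
  have htenda : Filter.Tendsto (fun n => mnorm (A + e n • U)) Filter.atTop (nhds (mnorm A)) :=
    (continuous_mnorm.tendsto _).comp htendA
  have htendX : Filter.Tendsto (fun n => (δ + mnorm (A + e n • U) + T)^(p-2) * T)
      Filter.atTop (nhds ((δ + mnorm A + T)^(p-2) * T)) := by
    have hbase : Filter.Tendsto (fun n => δ + mnorm (A + e n • U) + T)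
        Filter.atTop (nhds (δ + mnorm A + T)) := by
      exact ((tendsto_const_nhds.add htenda).add tendsto_const_nhds)
    have hbpos : (0:ℝ) < δ + mnorm A + T := by
      have := mnorm_nonneg A
      linarith
    have hrpow : Filter.Tendsto (fun n => (δ + mnorm (A + e n • U) + T)^(p-2))
        Filter.atTop (nhds ((δ + mnorm A + T)^(p-2))) :=
      ((Real.continuousAt_rpow_const _ _ (Or.inl hbpos.ne')).tendsto).comp hbase
    exact hrpow.mul_const T
  constructor
  · exact le_of_tendsto_of_tendsto' (htendX.const_mul _) htendS (fun n => (hkey n).1)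
  · exact le_of_tendsto_of_tendsto' htendS (htendX.const_mul _) (fun n => (hkey n).2)

/-- Hammer estimate: for `S` with `(p,δ)`-structure,
`|S(P) − S(Q)| ∼ φ'_{|P^sym|}(|P^sym − Q^sym|)` with constants depending only on the
characteristics `(κ₀, κ₁, p)` of `S`. -/
theorem hammer_S_diff (p κ₀ κ₁ : ℝ) (hp : 1 < p) (hκ₀ : 0 < κ₀) (hκ₁ : 0 < κ₁) :
    ∃ c C : ℝ, 0 < c ∧ 0 < C ∧ ∀ δ : ℝ, 0 ≤ δ → ∀ S : Mat3 → Mat3,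
      PDelta p δ κ₀ κ₁ S → ∀ P Q : Mat3,
        c * phiShift' p δ (mnorm (msym P)) (mnorm (msym P - msym Q)) ≤
            mnorm (S P - S Q) ∧
        mnorm (S P - S Q) ≤
            C * phiShift' p δ (mnorm (msym P)) (mnorm (msym P - msym Q)) := by
  have hp1 : (0:ℝ) < p - 1 := by linarith
  refine ⟨κ₀ * min (p-1) 1 * min 1 ((1/4) * 6^(2-p)),
    81 * κ₁ * max (p-1) 1 * (1 + (5/(p-1)) * 4^(2-p) + 4^(2-p)), ?_, ?_, ?_⟩
  · have h1 : 0 < min (p-1) 1 := lt_min (by linarith) one_pos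
    have h2 : 0 < min (1:ℝ) ((1/4) * (6:ℝ)^(2-p)) :=
      lt_min one_pos (by positivity)
    exact mul_pos (mul_pos hκ₀ h1) h2
  · have h3 : (0:ℝ) < max (p-1) 1 := lt_of_lt_of_le one_pos (le_max_right _ _)
    have h4 : (0:ℝ) < 1 + (5/(p-1)) * (4:ℝ)^(2-p) + (4:ℝ)^(2-p) := by positivity
    have h5 : (0:ℝ) < 81 * κ₁ := by positivity
    exact mul_pos (mul_pos h5 h3) h4
  · intro δ hδ S hS P Q
    have h := core_all hp hκ₀ hκ₁ hδ hS (msym_transpose P) (msym_transpose Q)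
    rw [phiShift'_eq hδ (mnorm_nonneg _) (mnorm_nonneg _)]
    rw [hS.symdep P, hS.symdep Q]
    exact h
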